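/- Let f = Σ_{r=0}^n x_r^{d_1} g_r be a CW-Nagata polynomial of bidegree (d_1,d_2). For every j with 1 ≤ j ≤ d_2, the classes in A_{(0,j)} of the monomials U_1^{s_1}⋯U_m^{s_m} with s_1+⋯+s_m = j such that u_1^{s_1}⋯u_m^{s_m} divides at least one g_r form a K-basis of A_{(0,j)}; in particular dim_K A_{(0,j)} = f_j, the number of monic monomials of degree j in u_1,…,u_m dividing at least one g_r. -/

import Mathlib

open MvPolynomial

namespace CW

variable {σ K : Type*} [CommSemiring K]

/-- A generic "monomial contraction-type" action of the polynomial ring on itself,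
determined by a structure coefficient `ν c a` (the coefficient produced when the
operator monomial with exponent `a` acts on the monomial with exponent `c`). -/
noncomputable def genAct (ν : (σ →₀ ℕ) → (σ →₀ ℕ) → K) (α f : MvPolynomial σ K) :
    MvPolynomial σ K :=
  Finsupp.sum (AddMonoidAlgebra.coeff α) fun a ca => Finsupp.sum (AddMonoidAlgebra.coeff f) fun c cf => monomial (c - a) (ν c a * (ca * cf))

theorem genAct_zero_left (ν : (σ →₀ ℕ) → (σ →₀ ℕ) → K) (f : MvPolynomial σ K) :
    genAct ν 0 f = 0 :=
  Finsupp.sum_zero_index (h := fun a ca => Finsupp.sum (AddMonoidAlgebra.coeff f) fun c cf => monomial (c - a) (ν c a * (ca * cf)))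

theorem genAct_zero_right (ν : (σ →₀ ℕ) → (σ →₀ ℕ) → K) (α : MvPolynomial σ K) :
    genAct ν α 0 = 0 := by
  unfold genAct
  simp only [AddMonoidAlgebra.coeff_zero, Finsupp.sum, Finsupp.support_zero, Finset.sum_empty,
    Finset.sum_const_zero]

theorem genAct_add_left (ν : (σ →₀ ℕ) → (σ →₀ ℕ) → K) (α β f : MvPolynomial σ K) :
    genAct ν (α + β) f = genAct ν α f + genAct ν β f := by
  unfold genAct
  rw [AddMonoidAlgebra.coeff_add]
  apply Finsupp.sum_add_index'
  · intro a
    simp only [mul_zero, zero_mul, map_zero, Finsupp.sum, Finset.sum_const_zero]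
  · intro a b₁ b₂
    rw [← Finsupp.sum_add]
    apply Finsupp.sum_congr
    intro c _
    rw [add_mul, mul_add, map_add]

theorem genAct_add_right (ν : (σ →₀ ℕ) → (σ →₀ ℕ) → K) (α f g : MvPolynomial σ K) :
    genAct ν α (f + g) = genAct ν α f + genAct ν α g := by
  unfold genAct
  rw [AddMonoidAlgebra.coeff_add]
  rw [← Finsupp.sum_add]
  apply Finsupp.sum_congr
  intro a _
  apply Finsupp.sum_add_index'
  · intro c
    simp only [mul_zero, map_zero]
  · intro c c₁ c₂
    rw [mul_add, mul_add, map_add]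

theorem genAct_monomial (ν : (σ →₀ ℕ) → (σ →₀ ℕ) → K) (a c : σ →₀ ℕ) (r s : K) :
    genAct ν (monomial a r) (monomial c s) = monomial (c - a) (ν c a * (r * s)) := by
  unfold genAct
  rw [← single_eq_monomial a r, ← single_eq_monomial c s, AddMonoidAlgebra.coeff_single,
    AddMonoidAlgebra.coeff_single]
  rw [Finsupp.sum_single_index, Finsupp.sum_single_index]
  · simp only [mul_zero, map_zero]
  · simp only [mul_zero, zero_mul, map_zero, Finsupp.sum, Finset.sum_const_zero]

theorem genAct_mul {ν : (σ →₀ ℕ) → (σ →₀ ℕ) → K}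
    (hν : ∀ c a b, ν c (a + b) = ν c b * ν (c - b) a) (α β f : MvPolynomial σ K) :
    genAct ν (α * β) f = genAct ν α (genAct ν β f) := by
  induction α using MvPolynomial.induction_on' with
  | add p q hp hq => rw [add_mul, genAct_add_left, hp, hq, genAct_add_left]
  | monomial a r =>
    induction β using MvPolynomial.induction_on' with
    | add p q hp hq =>
      rw [mul_add, genAct_add_left, hp, hq, ← genAct_add_right, genAct_add_left]
    | monomial b s =>
      induction f using MvPolynomial.induction_on' with
      | add p q hp hq =>
        rw [genAct_add_right, hp, hq, ← genAct_add_right, ← genAct_add_right]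
      | monomial c t =>
        rw [monomial_mul, genAct_monomial, genAct_monomial, genAct_monomial,
          show c - (a + b) = c - b - a from by rw [tsub_tsub, add_comm], hν]
        congr 1
        ring

/-- The annihilator ideal of `f` under the action `genAct ν`. -/
noncomputable def annG (ν : (σ →₀ ℕ) → (σ →₀ ℕ) → K)
    (hν : ∀ c a b, ν c (a + b) = ν c b * ν (c - b) a) (f : MvPolynomial σ K) :
    Ideal (MvPolynomial σ K) where
  carrier := {α | genAct ν α f = 0}
  zero_mem' := genAct_zero_left ν f
  add_mem' := by
    intro a b ha hb
    show genAct ν (a + b) f = 0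
    rw [genAct_add_left, ha, hb, add_zero]
  smul_mem' := by
    intro c α hα
    show genAct ν (c * α) f = 0
    rw [genAct_mul hν, hα, genAct_zero_right]

/-- Structure coefficient of the contraction (apolarity) action: `X^a` sends `x^c`
to `x^(c-a)` if `a ≤ c` and to `0` otherwise. -/
noncomputable def cnu (c a : σ →₀ ℕ) : K :=
  open scoped Classical in if a ≤ c then 1 else 0

theorem cnu_mul (c a b : σ →₀ ℕ) :
    (cnu c (a + b) : K) = cnu c b * cnu (c - b) a := by
  classical
  unfold cnu
  by_cases hb : b ≤ c
  · by_cases ha : a ≤ c - b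
    · have h : a + b ≤ c := (le_tsub_iff_right hb).mp ha
      simp [hb, ha, h]
    · have h : ¬ a + b ≤ c := fun h => ha ((le_tsub_iff_right hb).mpr h)
      simp [hb, ha, h]
  · have h : ¬ a + b ≤ c := fun h => hb (le_trans le_add_self h)
    simp [hb, h]

/-- The contraction action `α ∘ f`. -/
noncomputable def cAct (α f : MvPolynomial σ K) : MvPolynomial σ K :=
  genAct cnu α f

/-- The annihilator `Ann(f)` of `f` under the contraction action, as an ideal. -/
noncomputable def cAnn (f : MvPolynomial σ K) : Ideal (MvPolynomial σ K) :=
  annG cnu cnu_mul f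

theorem mem_cAnn {f α : MvPolynomial σ K} : α ∈ cAnn f ↔ cAct α f = 0 := Iff.rfl

/-- The `K`-submodule of polynomials all of whose monomials satisfy `P`. -/
noncomputable def bihom (K : Type*) [CommSemiring K] {σ : Type*} (P : (σ →₀ ℕ) → Prop) :
    Submodule K (MvPolynomial σ K) where
  carrier := {p | ∀ c ∈ p.support, P c}
  zero_mem' := by
    intro c hc
    simp at hc
  add_mem' := by
    classical
    intro p q hp hq c hc
    rcases Finset.mem_union.mp (MvPolynomial.support_add hc) with h | h
    · exact hp c h
    · exact hq c h
  smul_mem' := by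
    intro k p hp c hc
    exact hp c (MvPolynomial.support_smul hc)

/-- The x-degree of an exponent vector. -/
def degX {n m : ℕ} (c : (Fin (n + 1) ⊕ Fin m) →₀ ℕ) : ℕ := ∑ r, c (Sum.inl r)

/-- The u-degree of an exponent vector. -/
def degU {n m : ℕ} (c : (Fin (n + 1) ⊕ Fin m) →₀ ℕ) : ℕ := ∑ k, c (Sum.inr k)

/-- The bihomogeneous component `T_(i,j)`. -/
noncomputable def Tbi (K : Type*) [CommSemiring K] {n m : ℕ} (i j : ℕ) :
    Submodule K (MvPolynomial (Fin (n + 1) ⊕ Fin m) K) :=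
  bihom K fun c => degX c = i ∧ degU c = j

/-- The bigraded component `A_(i,j)` of `A = T ⧸ Ann(f)`: the image of `T_(i,j)`
in the quotient. -/
noncomputable def Abi {K : Type*} [Field K] {n m : ℕ}
    (f : MvPolynomial (Fin (n + 1) ⊕ Fin m) K) (i j : ℕ) :
    Submodule K (MvPolynomial (Fin (n + 1) ⊕ Fin m) K ⧸ cAnn f) :=
  (Tbi K i j).map (Ideal.Quotient.mkₐ K (cAnn f)).toLinearMap


theorem genAct_sum_left {ι : Type*} (ν : (σ →₀ ℕ) → (σ →₀ ℕ) → K) (t : Finset ι)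
    (h : ι → MvPolynomial σ K) (f : MvPolynomial σ K) :
    genAct ν (∑ i ∈ t, h i) f = ∑ i ∈ t, genAct ν (h i) f := by
  classical
  induction t using Finset.induction with
  | empty => simp [genAct_zero_left]
  | insert _ _ hi ih =>
    rw [Finset.sum_insert hi, genAct_add_left, ih, Finset.sum_insert hi]

theorem genAct_sum_right {ι : Type*} (ν : (σ →₀ ℕ) → (σ →₀ ℕ) → K) (α : MvPolynomial σ K)
    (t : Finset ι) (h : ι → MvPolynomial σ K) :
    genAct ν α (∑ i ∈ t, h i) = ∑ i ∈ t, genAct ν α (h i) := by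
  classical
  induction t using Finset.induction with
  | empty => simp [genAct_zero_right]
  | insert _ _ hi ih =>
    rw [Finset.sum_insert hi, genAct_add_right, ih, Finset.sum_insert hi]

theorem cAct_monomial_sum {ι : Type*} (t : Finset ι) (E : ι → (σ →₀ ℕ)) (c : σ →₀ ℕ) (a : K) :
    cAct (monomial c a) (∑ r ∈ t, (monomial (E r) 1 : MvPolynomial σ K)) =
      ∑ r ∈ t, monomial (E r - c) (cnu (E r) c * a) := by
  unfold cAct
  rw [genAct_sum_right]
  exact Finset.sum_congr rfl fun r _ => by rw [genAct_monomial, mul_one]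
theorem stmt_0 {K : Type*} [Field K] [CharZero K] (n m d₁ d₂ : ℕ)
    (hd₁ : 1 ≤ d₁) (hd₂ : 2 ≤ d₂)
    -- the exponent vectors of the monic monomials `g_0, …, g_n` in `u_1, …, u_m`
    (g : Fin (n + 1) → (Fin m →₀ ℕ))
    (hgdeg : ∀ r, (∑ k, g r k) = d₂)
    (hginj : Function.Injective g)
    -- the CW-Nagata polynomial `f = ∑ x_r^{d₁} g_r`
    (f : MvPolynomial (Fin (n + 1) ⊕ Fin m) K)
    (hf : f = ∑ r, MvPolynomial.X (Sum.inl r) ^ d₁ *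
      MvPolynomial.monomial ((g r).mapDomain Sum.inr) 1)
    (j : ℕ) (hj : 1 ≤ j) (hjd : j ≤ d₂) :
    (∃ b : Module.Basis {s : Fin m →₀ ℕ // (∑ k, s k) = j ∧ ∃ r, s ≤ g r} K (Abi f 0 j),
      ∀ s, (b s : MvPolynomial (Fin (n + 1) ⊕ Fin m) K ⧸ cAnn f) =
        Ideal.Quotient.mk (cAnn f)
          (MvPolynomial.monomial ((s : Fin m →₀ ℕ).mapDomain Sum.inr) 1)) ∧
    Module.finrank K (Abi f 0 j) =
      (((Finset.univ : Finset (Fin (n + 1))).biUnion fun r => Finset.Iic (g r)).filter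
        fun s => (∑ k, s k) = j).card := by
  classical
  -- abbreviations
  let Sm : (Fin m →₀ ℕ) → ((Fin (n + 1) ⊕ Fin m) →₀ ℕ) := fun s => s.mapDomain Sum.inr
  let E : Fin (n + 1) → ((Fin (n + 1) ⊕ Fin m) →₀ ℕ) := fun r =>
    Finsupp.single (Sum.inl r) d₁ + Sm (g r)
  have hSl : ∀ (v : Fin m →₀ ℕ) (i : Fin (n + 1)), Sm v (Sum.inl i) = 0 := fun v i =>
    Finsupp.mapDomain_notin_range _ _ (by simp)
  have hSr : ∀ (v : Fin m →₀ ℕ) (k : Fin m), Sm v (Sum.inr k) = v k := fun v k =>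
    Finsupp.mapDomain_apply Sum.inr_injective _ _
  have hEl : ∀ r i, E r (Sum.inl i) = if r = i then d₁ else 0 := fun r i => by
    simp [E, hSl, Finsupp.single_apply]
  have hEr : ∀ r k, E r (Sum.inr k) = g r k := fun r k => by
    simp [E, hSr, Finsupp.single_apply]
  have hfE : f = ∑ r, monomial (E r) 1 := by
    rw [hf]
    refine Finset.sum_congr rfl fun r _ => ?_
    rw [X_pow_eq_monomial, monomial_mul, one_mul]
  have hle : ∀ (s : Fin m →₀ ℕ) r, Sm s ≤ E r ↔ s ≤ g r := by
    intro s r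
    constructor
    · intro h
      rw [Finsupp.le_def]
      intro k
      have := Finsupp.le_def.mp h (Sum.inr k)
      rwa [hSr, hEr] at this
    · intro h
      rw [Finsupp.le_def]
      rintro (i | k)
      · simp [hSl]
      · rw [hSr, hEr]
        exact Finsupp.le_def.mp h k
  have hcnu : ∀ (s : Fin m →₀ ℕ) r, (cnu (E r) (Sm s) : K) = if s ≤ g r then 1 else 0 := by
    intro s r
    unfold cnu
    by_cases h : s ≤ g r
    · rw [if_pos ((hle s r).mpr h), if_pos h]
    · rw [if_neg (fun hh => h ((hle s r).mp hh)), if_neg h]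
  have hinj : ∀ (s s' : Fin m →₀ ℕ) r r', s ≤ g r → s' ≤ g r' →
      E r - Sm s = E r' - Sm s' → r = r' ∧ s = s' := by
    intro s s' r r' hs hs' heq
    have hr : r = r' := by
      by_contra hne
      have h1 := DFunLike.congr_fun heq (Sum.inl r)
      rw [Finsupp.tsub_apply, Finsupp.tsub_apply, hSl, hSl, hEl, hEl,
        if_pos rfl, if_neg (fun h => hne h.symm)] at h1
      omega
    subst hr
    refine ⟨rfl, ?_⟩
    ext k
    have h2 := DFunLike.congr_fun heq (Sum.inr k)
    rw [Finsupp.tsub_apply, Finsupp.tsub_apply, hSr, hSr, hEr] at h2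
    have hk := Finsupp.le_def.mp hs k
    have hk' := Finsupp.le_def.mp hs' k
    omega
  -- membership in Tbi
  have hmemT : ∀ s : Fin m →₀ ℕ, (∑ k, s k) = j → monomial (Sm s) (1 : K) ∈ Tbi K 0 j := by
    intro s hs c hc
    rw [MvPolynomial.support_monomial, if_neg one_ne_zero, Finset.mem_singleton] at hc
    subst hc
    constructor
    · simp [degX, hSl]
    · simp only [degU, hSr, hs]
  -- annihilated monomials
  have hann : ∀ (s : Fin m →₀ ℕ) (a : K), (∀ r, ¬s ≤ g r) → monomial (Sm s) a ∈ cAnn f := by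
    intro s a hbad
    rw [mem_cAnn, hfE, cAct_monomial_sum]
    refine Finset.sum_eq_zero fun r _ => ?_
    rw [hcnu, if_neg (hbad r), zero_mul, map_zero]
  -- the candidate vectors in the quotient
  set I := {s : Fin m →₀ ℕ // (∑ k, s k) = j ∧ ∃ r, s ≤ g r} with hI
  let mk : MvPolynomial (Fin (n + 1) ⊕ Fin m) K →ₐ[K] MvPolynomial (Fin (n + 1) ⊕ Fin m) K ⧸ cAnn f := Ideal.Quotient.mkₐ K (cAnn f)
  let v : I → MvPolynomial (Fin (n + 1) ⊕ Fin m) K ⧸ cAnn f := fun s => mk (monomial (Sm (s : Fin m →₀ ℕ)) 1)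
  have hmk : ∀ (s : Fin m →₀ ℕ) (a : K), a • mk (monomial (Sm s) 1) = mk (monomial (Sm s) a) := by
    intro s a
    rw [← map_smul, smul_monomial, smul_eq_mul, mul_one]
  -- linear independence of v
  have hli : LinearIndependent K v := by
    rw [linearIndependent_iff']
    intro t c hsum i₀ hi₀
    have hp : (∑ i ∈ t, monomial (Sm (i : Fin m →₀ ℕ)) (c i) : MvPolynomial (Fin (n + 1) ⊕ Fin m) K) ∈ cAnn f := by
      rw [← Ideal.Quotient.eq_zero_iff_mem]
      have : Ideal.Quotient.mk (cAnn f) (∑ i ∈ t, monomial (Sm (i : Fin m →₀ ℕ)) (c i))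
          = ∑ i ∈ t, c i • v i := by
        rw [map_sum]
        exact Finset.sum_congr rfl fun i _ => (hmk _ _).symm
      rw [this, hsum]
    rw [mem_cAnn] at hp
    obtain ⟨r₀, hr₀⟩ := i₀.2.2
    have hc0 : MvPolynomial.coeff (E r₀ - Sm (i₀ : Fin m →₀ ℕ)) (cAct
        (∑ i ∈ t, monomial (Sm (i : Fin m →₀ ℕ)) (c i)) f) = c i₀ := by
      unfold cAct
      rw [genAct_sum_left]
      rw [coeff_sum]
      have hterm : ∀ i ∈ t, MvPolynomial.coeff (E r₀ - Sm (i₀ : Fin m →₀ ℕ))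
          (genAct cnu (monomial (Sm (i : Fin m →₀ ℕ)) (c i)) f)
          = if i = i₀ then c i₀ else 0 := by
        intro i _
        rw [show genAct cnu (monomial (Sm (i : Fin m →₀ ℕ)) (c i)) f
            = cAct (monomial (Sm (i : Fin m →₀ ℕ)) (c i)) f from rfl, hfE, cAct_monomial_sum,
          coeff_sum]
        have hterm2 : ∀ r ∈ (Finset.univ : Finset (Fin (n + 1))),
            MvPolynomial.coeff (E r₀ - Sm (i₀ : Fin m →₀ ℕ))
              (monomial (E r - Sm (i : Fin m →₀ ℕ)) ((cnu (E r) (Sm (i : Fin m →₀ ℕ)) : K) * c i))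
            = if i = i₀ ∧ r = r₀ then c i₀ else 0 := by
          intro r _
          rw [MvPolynomial.coeff_monomial]
          by_cases hig : (i : Fin m →₀ ℕ) ≤ g r
          · by_cases heq : E r - Sm (i : Fin m →₀ ℕ) = E r₀ - Sm (i₀ : Fin m →₀ ℕ)
            · obtain ⟨hrr, hss⟩ := hinj _ _ _ _ hig hr₀ heq
              have hii : i = i₀ := Subtype.ext hss
              rw [if_pos heq, if_pos ⟨hii, hrr⟩, hcnu, if_pos hig, one_mul, hii]
            · have hcond : ¬(i = i₀ ∧ r = r₀) := by
                rintro ⟨hii, hrr⟩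
                exact heq (by rw [hii, hrr])
              rw [if_neg heq, if_neg hcond]
          · have hcond : ¬(i = i₀ ∧ r = r₀) := by
              rintro ⟨hii, hrr⟩
              rw [hii, hrr] at hig
              exact hig hr₀
            rw [hcnu, if_neg hig, zero_mul, if_neg hcond, ite_self]
        rw [Finset.sum_congr rfl hterm2]
        by_cases hii : i = i₀
        · simp [hii]
        · simp [hii]
      rw [Finset.sum_congr rfl hterm, Finset.sum_ite_eq' t i₀ (fun _ => c i₀), if_pos hi₀]
    rw [hp] at hc0
    simpa using hc0.symm
  -- the vectors land in Abi f 0 j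
  have hmemA : ∀ s : I, v s ∈ Abi f 0 j := by
    intro s
    exact Submodule.mem_map_of_mem (hmemT _ s.2.1)
  let w : I → Abi f 0 j := fun s => ⟨v s, hmemA s⟩
  have hcw : (Abi f 0 j).subtype ∘ w = v := rfl
  have hliw : LinearIndependent K w :=
    LinearIndependent.of_comp (Abi f 0 j).subtype (by rwa [hcw])
  -- spanning
  have hspan : ⊤ ≤ Submodule.span K (Set.range w) := by
    intro x _
    have hx : (x : MvPolynomial (Fin (n + 1) ⊕ Fin m) K ⧸ cAnn f) ∈ Abi f 0 j := x.2
    obtain ⟨p, hp, hpx⟩ := Submodule.mem_map.mp hx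
    have hxin : (x : MvPolynomial (Fin (n + 1) ⊕ Fin m) K ⧸ cAnn f) ∈ Submodule.span K (⇑(Abi f 0 j).subtype '' Set.range w) := by
      rw [← hpx]
      show mk p ∈ _
      rw [← support_sum_monomial_coeff p, map_sum]
      refine Submodule.sum_mem _ fun c hc => ?_
      have hdeg := hp c hc
      have hc0 : ∀ i, c (Sum.inl i) = 0 := by
        intro i
        have h0 : (∑ r, c (Sum.inl r)) = 0 := hdeg.1
        exact Finset.sum_eq_zero_iff.mp h0 i (Finset.mem_univ i)
      set s : Fin m →₀ ℕ := Finsupp.comapDomain Sum.inr c Sum.inr_injective.injOn with hs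
      have hsc : Sm s = c := by
        ext a
        cases a with
        | inl i => rw [hSl, hc0]
        | inr k => rw [hSr, hs, Finsupp.comapDomain_apply]
      have hsj : (∑ k, s k) = j := by
        have h2 : (∑ k, c (Sum.inr k)) = j := hdeg.2
        simpa [hs, Finsupp.comapDomain_apply] using h2
      by_cases hex : ∃ r, s ≤ g r
      · have : mk (monomial c (MvPolynomial.coeff c p))
            = MvPolynomial.coeff c p • (Abi f 0 j).subtype (w ⟨s, hsj, hex⟩) := by
          show _ = MvPolynomial.coeff c p • mk (monomial (Sm s) 1)
          rw [hmk, hsc]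
        rw [this]
        exact Submodule.smul_mem _ _ (Submodule.subset_span ⟨w ⟨s, hsj, hex⟩, ⟨_, rfl⟩, rfl⟩)
      · push_neg at hex
        have : mk (monomial c (MvPolynomial.coeff c p)) = 0 := by
          rw [show (mk (monomial c (MvPolynomial.coeff c p)) : MvPolynomial (Fin (n + 1) ⊕ Fin m) K ⧸ cAnn f)
            = Ideal.Quotient.mk (cAnn f) (monomial c (MvPolynomial.coeff c p)) from rfl,
            Ideal.Quotient.eq_zero_iff_mem, ← hsc]
          exact hann s _ hex
        rw [this]
        exact Submodule.zero_mem _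
    rw [Submodule.span_image, Submodule.mem_map] at hxin
    obtain ⟨y, hy, hyx⟩ := hxin
    have : y = x := Subtype.ext hyx
    rwa [← this]
  let b : Module.Basis I K (Abi f 0 j) := Module.Basis.mk hliw hspan
  have hb : ∀ s, (b s : MvPolynomial (Fin (n + 1) ⊕ Fin m) K ⧸ cAnn f) = Ideal.Quotient.mk (cAnn f)
      (monomial ((s : Fin m →₀ ℕ).mapDomain Sum.inr) 1) := by
    intro s
    rw [Module.Basis.mk_apply]
    rfl
  -- cardinality
  set F := (((Finset.univ : Finset (Fin (n + 1))).biUnion fun r => Finset.Iic (g r)).filter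
    fun s => (∑ k, s k) = j) with hF
  have hiff : ∀ s : Fin m →₀ ℕ, ((∑ k, s k) = j ∧ ∃ r, s ≤ g r) ↔ s ∈ F := by
    intro s
    rw [hF, Finset.mem_filter, Finset.mem_biUnion]
    constructor
    · rintro ⟨h1, r, h2⟩
      exact ⟨⟨r, Finset.mem_univ r, Finset.mem_Iic.mpr h2⟩, h1⟩
    · rintro ⟨⟨r, _, h2⟩, h1⟩
      exact ⟨h1, r, Finset.mem_Iic.mp h2⟩
  let e : I ≃ {s // s ∈ F} := Equiv.subtypeEquivRight hiff
  haveI : Fintype I := Fintype.ofEquiv _ e.symm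
  refine ⟨⟨b, hb⟩, ?_⟩
  rw [Module.finrank_eq_card_basis b, Fintype.card_congr e, Fintype.card_coe]

end CW
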